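/- arXiv:0903.0789 — 5 statements merged into one kernel-verified Lean document; each statement's English description precedes it below -/
import Mathlib

section
/- Let g1 and g2 be finite-dimensional real Lie algebras of compact type, each equipped with a symmetric decomposition g_i = h_i ⊕ m_i. Assume m1 has the rank-one property: any X, Y ∈ m1 with ⁅X,Y⁆ = 0 are linearly dependent. Let t ⊆ m1 × m2 be a Lie triple system of the product Lie algebra g1 × g2 such that the first projection π1 restricted to t is injective (this holds, for example, if ‖π2(x)‖ ≤ Λ‖x‖ for all x ∈ t for some constant Λ < 1, where norms come from the negative Killing forms). Then π1 is injective on the Lie subalgebra k := t + span{⁅x,y⁆ : x, y ∈ t}. -/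
/-! The product of two Lie algebras, with componentwise bracket. -/

section ProdLie

variable {𝕜 : Type*} [CommRing 𝕜] {L₁ L₂ : Type*} [LieRing L₁] [LieRing L₂]

instance Prod.instLieRing : LieRing (L₁ × L₂) where
  bracket x y := (⁅x.1, y.1⁆, ⁅x.2, y.2⁆)
  add_lie x y z := by ext <;> simp [add_lie]
  lie_add x y z := by ext <;> simp [lie_add]
  lie_self x := by ext <;> simp
  leibniz_lie x y z := by ext <;> exact leibniz_lie _ _ _

@[simp] theorem Prod.lie_def (x y : L₁ × L₂) : ⁅x, y⁆ = (⁅x.1, y.1⁆, ⁅x.2, y.2⁆) := rfl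

instance Prod.instLieAlgebra [LieAlgebra 𝕜 L₁] [LieAlgebra 𝕜 L₂] :
    LieAlgebra 𝕜 (L₁ × L₂) where
  lie_smul c x y := by ext <;> simp [lie_smul]

end ProdLie

/-- Let `g₁, g₂` be finite-dimensional real Lie algebras of compact type
(negative-definite Killing forms), each with a symmetric decomposition `gᵢ = hᵢ ⊕ mᵢ`,
and suppose `m₁` has the rank-one property.  If `t ⊆ m₁ × m₂` is a Lie triple system of
`g₁ × g₂` on which the first projection `π₁` is injective, then `π₁` is injective on the
Lie subalgebra `k := t + span {⁅x,y⁆ : x, y ∈ t}`. -/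
theorem injOn_fst_sup_span_brackets
    {g₁ g₂ : Type*} [LieRing g₁] [LieAlgebra ℝ g₁] [FiniteDimensional ℝ g₁]
    [LieRing g₂] [LieAlgebra ℝ g₂] [FiniteDimensional ℝ g₂]
    (hcpt₁ : ∀ x : g₁, x ≠ 0 → killingForm ℝ g₁ x x < 0)
    (hcpt₂ : ∀ x : g₂, x ≠ 0 → killingForm ℝ g₂ x x < 0)
    (h₁ m₁ : Submodule ℝ g₁) (hco₁ : IsCompl h₁ m₁)
    (hhh₁ : ∀ x ∈ h₁, ∀ y ∈ h₁, ⁅x, y⁆ ∈ h₁)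
    (hhm₁ : ∀ x ∈ h₁, ∀ y ∈ m₁, ⁅x, y⁆ ∈ m₁)
    (hmm₁ : ∀ x ∈ m₁, ∀ y ∈ m₁, ⁅x, y⁆ ∈ h₁)
    (h₂ m₂ : Submodule ℝ g₂) (hco₂ : IsCompl h₂ m₂)
    (hhh₂ : ∀ x ∈ h₂, ∀ y ∈ h₂, ⁅x, y⁆ ∈ h₂)
    (hhm₂ : ∀ x ∈ h₂, ∀ y ∈ m₂, ⁅x, y⁆ ∈ m₂)
    (hmm₂ : ∀ x ∈ m₂, ∀ y ∈ m₂, ⁅x, y⁆ ∈ h₂)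
    (hrank : ∀ X ∈ m₁, ∀ Y ∈ m₁, ⁅X, Y⁆ = 0 → ¬ LinearIndependent ℝ ![X, Y])
    (t : Submodule ℝ (g₁ × g₂))
    (htsub : t ≤ m₁.prod m₂)
    (ht : ∀ x ∈ t, ∀ y ∈ t, ∀ z ∈ t, ⁅⁅x, y⁆, z⁆ ∈ t)
    (hinj : Set.InjOn (LinearMap.fst ℝ g₁ g₂) t) :
    Set.InjOn (LinearMap.fst ℝ g₁ g₂)
      ((t ⊔ Submodule.span ℝ {z | ∃ x ∈ t, ∃ y ∈ t, z = ⁅x, y⁆} : Submodule ℝ (g₁ × g₂)) :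
        Set (g₁ × g₂)) := by
  set S : Set (g₁ × g₂) := {z | ∃ x ∈ t, ∃ y ∈ t, z = ⁅x, y⁆} with hSdef
  -- brackets of span S elements with t-elements land in t
  have key1 : ∀ s ∈ Submodule.span ℝ S, ∀ u ∈ t, ⁅s, u⁆ ∈ t := by
    intro s hs u hu
    induction hs using Submodule.span_induction with
    | mem z hz =>
        obtain ⟨x, hx, y, hy, rfl⟩ := hz
        exact ht _ hx _ hy _ hu
    | zero => simpa using t.zero_mem
    | add a b _ _ ha hb => rw [add_lie]; exact t.add_mem ha hb
    | smul c a _ ha => rw [smul_lie]; exact t.smul_mem c ha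
  -- if s ∈ span S has zero first component, then s = 0
  have key2 : ∀ s ∈ Submodule.span ℝ S, s.1 = 0 → s = 0 := by
    intro s hs hs1
    have hbr : ∀ u ∈ t, ⁅s.2, u.2⁆ = 0 := by
      intro u hu
      have h1 : ⁅s, u⁆ ∈ t := key1 s hs u hu
      have h2 : (⁅s, u⁆ : g₁ × g₂) = 0 := by
        apply hinj h1 t.zero_mem
        simp [hs1]
      simpa using congrArg Prod.snd h2
    have hs2mem : s.2 ∈ Submodule.span ℝ (Prod.snd '' S) := by
      have : (LinearMap.snd ℝ g₁ g₂) s ∈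
          Submodule.map (LinearMap.snd ℝ g₁ g₂) (Submodule.span ℝ S) :=
        Submodule.mem_map_of_mem hs
      rwa [Submodule.map_span] at this
    have hker : Submodule.span ℝ (Prod.snd '' S) ≤
        LinearMap.ker (killingForm ℝ g₂ s.2) := by
      rw [Submodule.span_le]
      rintro _ ⟨z, ⟨x, hx, y, hy, rfl⟩, rfl⟩
      have := LieModule.traceForm_apply_lie_apply ℝ g₂ g₂ s.2 x.2 y.2
      rw [hbr x hx] at this
      refine LinearMap.mem_ker.mpr ?_
      simpa using this.symm
    have hzero : killingForm ℝ g₂ s.2 s.2 = 0 := hker hs2mem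
    have hs2 : s.2 = 0 := by
      by_contra h
      exact absurd hzero (ne_of_lt (hcpt₂ s.2 h))
    exact Prod.ext hs1 hs2
  -- main argument
  intro a ha b hb hab
  have hw : a - b ∈ t ⊔ Submodule.span ℝ S := Submodule.sub_mem _ ha hb
  obtain ⟨u, hu, s, hs, huv⟩ := Submodule.mem_sup.mp hw
  have hw1 : (a - b).1 = 0 := by
    have : a.1 = b.1 := hab
    simp [this]
  -- first component of s lies in h₁
  have hs1h : s.1 ∈ h₁ := by
    have hmem : (LinearMap.fst ℝ g₁ g₂) s ∈
        Submodule.map (LinearMap.fst ℝ g₁ g₂) (Submodule.span ℝ S) :=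
      Submodule.mem_map_of_mem hs
    rw [Submodule.map_span] at hmem
    have hle : Submodule.span ℝ (Prod.fst '' S) ≤ h₁ := by
      rw [Submodule.span_le]
      rintro _ ⟨z, ⟨x, hx, y, hy, rfl⟩, rfl⟩
      exact hmm₁ _ (htsub hx).1 _ (htsub hy).1
    exact hle hmem
  have hu1m : u.1 ∈ m₁ := (htsub hu).1
  have hsum : u.1 + s.1 = 0 := by
    have := congrArg Prod.fst huv
    simpa [hw1] using this
  have hu1h : u.1 ∈ h₁ := by
    have : u.1 = -s.1 := eq_neg_of_add_eq_zero_left hsum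
    rw [this]; exact h₁.neg_mem hs1h
  have hu1 : u.1 = 0 := Submodule.disjoint_def.mp hco₁.disjoint u.1 hu1h hu1m
  have hu0 : u = 0 := by
    apply hinj hu t.zero_mem
    simpa using hu1
  have hs1 : s.1 = 0 := by
    have := hsum
    rw [hu1] at this
    simpa using this
  have hs0 : s = 0 := key2 s hs hs1
  have : a - b = 0 := by rw [← huv, hu0, hs0, add_zero]
  exact sub_eq_zero.mp this
end

section
/- In so(n+1), for all v, w ∈ ℝⁿ, the bracket ⁅X_v, X_w⁆ vanishes if and only if v and w are linearly dependent. (This expresses that the symmetric pair (so(n+1), so(n)) has rank one.) -/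
open Matrix

/-- For `v ∈ ℝⁿ`, the matrix `X_v ∈ so(n+1)` with `(0,j)` entry `v_j`, `(j,0)` entry `-v_j`
(`j = 1, …, n`) and all other entries zero. -/
def Xmat {n : ℕ} (v : Fin n → ℝ) : Matrix (Fin (n + 1)) (Fin (n + 1)) ℝ :=
  Matrix.of fun i j =>
    if hi : i = 0 then (if hj : j = 0 then 0 else v (j.pred hj))
    else if hj : j = 0 then -v (i.pred hi) else 0

lemma Xmat_bracket_succ_succ {n : ℕ} (v w : Fin n → ℝ) (i j : Fin n) :
    (⁅Xmat v, Xmat w⁆) i.succ j.succ = w i * v j - v i * w j := by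
  simp [Ring.lie_def, Matrix.mul_apply, Xmat, Fin.sum_univ_succ, Fin.succ_ne_zero]
  ring

lemma Xmat_bracket_zero_left {n : ℕ} (v w : Fin n → ℝ) (j : Fin (n+1)) :
    (⁅Xmat v, Xmat w⁆) 0 j = 0 := by
  induction j using Fin.cases
  all_goals simp [Ring.lie_def, Matrix.mul_apply, Xmat, Fin.sum_univ_succ, Fin.succ_ne_zero,
    mul_comm]

lemma Xmat_bracket_zero_right {n : ℕ} (v w : Fin n → ℝ) (j : Fin (n+1)) :
    (⁅Xmat v, Xmat w⁆) j 0 = 0 := by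
  induction j using Fin.cases
  all_goals simp [Ring.lie_def, Matrix.mul_apply, Xmat, Fin.sum_univ_succ, Fin.succ_ne_zero,
    mul_comm]

lemma Xmat_bracket_eq_zero_iff_cross {n : ℕ} (v w : Fin n → ℝ) :
    ⁅Xmat v, Xmat w⁆ = 0 ↔ ∀ i j, v i * w j = w i * v j := by
  constructor
  · intro h i j
    have := congrFun (congrFun h i.succ) j.succ
    rw [Xmat_bracket_succ_succ] at this
    simp at this
    linarith [this]
  · intro h
    ext i j
    induction i using Fin.cases with
    | zero => simpa using Xmat_bracket_zero_left v w j
    | succ i =>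
      induction j using Fin.cases with
      | zero => simpa using Xmat_bracket_zero_right v w i.succ
      | succ j =>
        rw [Xmat_bracket_succ_succ]
        simp [h i j]

/-- In `so(n+1)` the bracket `⁅X_v, X_w⁆` vanishes if and only if `v` and
`w` are linearly dependent: the symmetric pair `(so(n+1), so(n))` has rank one. -/
theorem Xmat_bracket_eq_zero_iff_not_linearIndependent {n : ℕ} (v w : Fin n → ℝ) :
    ⁅Xmat v, Xmat w⁆ = 0 ↔ ¬ LinearIndependent ℝ ![v, w] := by
  rw [Xmat_bracket_eq_zero_iff_cross, linearIndependent_fin2]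
  push_neg
  simp only [Matrix.cons_val_zero, Matrix.cons_val_one, Matrix.head_cons]
  constructor
  · intro h
    by_cases hw : w = 0
    · intro hne; exact absurd hw hne
    · intro _
      obtain ⟨i0, hi0⟩ : ∃ i, w i ≠ 0 := by
        by_contra hc; push_neg at hc; exact hw (funext hc)
      refine ⟨v i0 / w i0, funext fun j => ?_⟩
      have := h i0 j
      simp only [Pi.smul_apply, smul_eq_mul]
      field_simp
      linarith [this]
  · intro h i j
    by_cases hw : w = 0
    · simp [hw]
    · obtain ⟨a, ha⟩ := h hw
      have hvi : v i = a * w i := by rw [← ha]; simp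
      have hvj : v j = a * w j := by rw [← ha]; simp
      rw [hvi, hvj]; ring
end

section
/- Let h be a real Lie algebra and let M be a nonzero finite-dimensional real inner product space carrying a Lie module structure over h such that for every H ∈ h the operator x ↦ H • x on M is skew-adjoint with respect to the inner product. Assume M is irreducible as an h-module, i.e. its only h-invariant subspaces are {0} and M. Then every symmetric bilinear form T : M × M → ℝ satisfying T(H•x, y) + T(x, H•y) = 0 for all H ∈ h and x, y ∈ M is a scalar multiple of the inner product: there exists ρ ∈ ℝ with T(x,y) = ρ·⟨x,y⟩ for all x, y ∈ M. -/
open scoped RealInnerProductSpace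

/-- Schur-type lemma.  Let `M` be a nonzero finite-dimensional real
inner product space with a Lie module structure over a real Lie algebra `h` acting by
skew-adjoint operators, and suppose `M` is irreducible (its only `h`-invariant subspaces
are `{0}` and `M`).  Then every `h`-invariant symmetric bilinear form on `M` is a scalar
multiple of the inner product. -/
theorem invariant_symm_bilin_eq_smul_inner
    {h : Type*} [LieRing h] [LieAlgebra ℝ h]
    {M : Type*} [NormedAddCommGroup M] [InnerProductSpace ℝ M] [FiniteDimensional ℝ M]
    [Nontrivial M] [LieRingModule h M] [LieModule ℝ h M]
    (hskew : ∀ (H : h) (x y : M), ⟪⁅H, x⁆, y⟫ + ⟪x, ⁅H, y⁆⟫ = 0)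
    (hirr : ∀ N : Submodule ℝ M, (∀ (H : h), ∀ x ∈ N, ⁅H, x⁆ ∈ N) → N = ⊥ ∨ N = ⊤)
    (T : M →ₗ[ℝ] M →ₗ[ℝ] ℝ)
    (hsymm : ∀ x y : M, T x y = T y x)
    (hinv : ∀ (H : h) (x y : M), T ⁅H, x⁆ y + T x ⁅H, y⁆ = 0) :
    ∃ ρ : ℝ, ∀ x y : M, T x y = ρ * ⟪x, y⟫ := by
  classical
  -- Build the operator `A` with ⟪A x, y⟫ = T x y.
  let A : M →ₗ[ℝ] M :=
    { toFun := fun x => (InnerProductSpace.toDual ℝ M).symm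
        (LinearMap.toContinuousLinearMap (T x))
      map_add' := by
        intro x y
        simp [map_add]
      map_smul' := by
        intro c x
        simp [map_smul] }
  have hA : ∀ x y : M, ⟪A x, y⟫ = T x y := by
    intro x y
    simp [A, InnerProductSpace.toDual_symm_apply]
  -- A is symmetric
  have hAsymm : (A : M →ₗ[ℝ] M).IsSymmetric := by
    intro x y
    rw [hA, hsymm, ← hA, real_inner_comm]
  -- A commutes with the action
  have hAcomm : ∀ (H : h) (x : M), A ⁅H, x⁆ = ⁅H, A x⁆ := by
    intro H x
    have key : ∀ y : M, ⟪A ⁅H, x⁆ - ⁅H, A x⁆, y⟫ = 0 := by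
      intro y
      rw [inner_sub_left, hA]
      have h1 := hinv H x y
      have h2 := hskew H (A x) y
      have h3 := hA x ⁅H, y⁆
      linarith
    have := key (A ⁅H, x⁆ - ⁅H, A x⁆)
    rw [inner_self_eq_zero] at this
    exact sub_eq_zero.mp this
  -- A has an eigenvalue
  obtain ⟨ρ, hρ⟩ : ∃ ρ : ℝ, Module.End.HasEigenvalue A ρ :=
    ⟨_, hAsymm.hasEigenvalue_iSup_of_finiteDimensional⟩
  -- The eigenspace is h-invariant
  set N := Module.End.eigenspace A ρ with hN
  have hNinv : ∀ (H : h), ∀ x ∈ N, ⁅H, x⁆ ∈ N := by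
    intro H x hx
    have hx' : A x = ρ • x := Module.End.mem_eigenspace_iff.mp hx
    rw [hN, Module.End.mem_eigenspace_iff, hAcomm, hx', lie_smul]
  have hNne : N ≠ ⊥ := by
    obtain ⟨v, hv⟩ := hρ.exists_hasEigenvector
    intro hbot
    have : v ∈ (⊥ : Submodule ℝ M) := hbot ▸ hv.1
    exact hv.2 (Submodule.mem_bot ℝ |>.mp this)
  have hNtop : N = ⊤ := (hirr N hNinv).resolve_left hNne
  refine ⟨ρ, fun x y => ?_⟩
  have hx : A x = ρ • x := by
    have : x ∈ N := hNtop ▸ Submodule.mem_top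
    exact Module.End.mem_eigenspace_iff.mp this
  rw [← hA, hx, real_inner_smul_left]
end

section
/- Let g be a finite-dimensional real Lie algebra of compact type (its Killing form is negative definite), with a symmetric decomposition g = h ⊕ m. For X, Y ∈ m define Ric(X,Y) := tr(Z ↦ −⁅X,⁅Y,Z⁆⁆), the trace of the linear endomorphism of m sending Z to −⁅X,⁅Y,Z⁆⁆ (which indeed maps m into m). Then Ric is a symmetric, positive-definite bilinear form on m. -/
open LinearMap Module

private lemma skew_trace_zero' {V : Type*} [AddCommGroup V] [Module ℝ V] [FiniteDimensional ℝ V]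
    (B : V →ₗ[ℝ] V →ₗ[ℝ] ℝ)
    (hdef : ∀ x : V, x ≠ 0 → B x x < 0)
    (f : V →ₗ[ℝ] V) (hskew : ∀ x y, B (f x) y = - B x (f y)) :
    LinearMap.trace ℝ V f = 0 := by
  have hinj : Function.Injective B := by
    intro x y hxy
    by_contra hne
    have hx : x - y ≠ 0 := sub_ne_zero.mpr hne
    have h1 := hdef (x - y) hx
    have hz : B (x - y) = 0 := by rw [map_sub, hxy, sub_self]
    rw [hz] at h1
    simp at h1
  have hfr : Module.finrank ℝ V = Module.finrank ℝ (Module.Dual ℝ V) :=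
    (Subspace.dual_finrank_eq).symm
  let e : V ≃ₗ[ℝ] Module.Dual ℝ V := LinearMap.linearEquivOfInjective B hinj hfr
  have he : ∀ x, (e x : Module.Dual ℝ V) = B x := fun x => rfl
  have hconj : e.conj f = - Module.Dual.transpose (R := ℝ) f := by
    apply LinearMap.ext
    intro φ
    obtain ⟨x, rfl⟩ := e.surjective φ
    rw [LinearEquiv.conj_apply]
    simp only [LinearMap.comp_apply, LinearEquiv.coe_coe, LinearEquiv.symm_apply_apply]
    apply LinearMap.ext
    intro y
    simp only [he, LinearMap.neg_apply, Module.Dual.transpose_apply, LinearMap.comp_apply]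
    rw [hskew x y]
  have h1 : LinearMap.trace ℝ _ (e.conj f) = LinearMap.trace ℝ V f :=
    LinearMap.trace_conj' f e
  rw [hconj] at h1
  have h2 : LinearMap.trace ℝ (Module.Dual ℝ V) (-Module.Dual.transpose (R := ℝ) f)
      = - LinearMap.trace ℝ (Module.Dual ℝ V) (Module.Dual.transpose (R := ℝ) f) :=
    (LinearMap.trace ℝ (Module.Dual ℝ V)).map_neg (Module.Dual.transpose (R := ℝ) f)
  rw [h2, LinearMap.trace_transpose' f] at h1
  linarith

private lemma trace_split' {g : Type*} [AddCommGroup g] [Module ℝ g] [FiniteDimensional ℝ g]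
    (h m : Submodule ℝ g) (hco : IsCompl h m) (f : g →ₗ[ℝ] g)
    (hfh : Set.MapsTo f h h) (hfm : Set.MapsTo f m m) :
    LinearMap.trace ℝ g f
      = LinearMap.trace ℝ h (f.restrict hfh) + LinearMap.trace ℝ m (f.restrict hfm) := by
  let N : Bool → Submodule ℝ g := fun b => bif b then h else m
  have hint : DirectSum.IsInternal N := by
    rw [DirectSum.isInternal_submodule_iff_isCompl N (i := true) (j := false) (by simp)
      (by ext b; cases b <;> simp)]
    exact hco
  have hf : ∀ b, Set.MapsTo f (N b) (N b) := by
    intro b; cases b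
    · exact hfm
    · exact hfh
  rw [LinearMap.trace_eq_sum_trace_restrict hint hf, Fintype.sum_bool]
  rfl

/-- Let `g` be a finite-dimensional real Lie algebra of compact type
(negative-definite Killing form) with a symmetric decomposition `g = h ⊕ m`.  For
`X, Y ∈ m`, let `Ric(X,Y)` be the trace of the endomorphism `Z ↦ -⁅X,⁅Y,Z⁆⁆` of `m`
(here encoded by a bilinear map `T` with `T X Y Z = -⁅X,⁅Y,Z⁆⁆` for `X, Y, Z ∈ m`).
Then `Ric` is a symmetric, positive-definite bilinear form on `m`. -/
theorem ricci_symm_posDef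
    {g : Type*} [LieRing g] [LieAlgebra ℝ g] [FiniteDimensional ℝ g]
    (hcpt : ∀ x : g, x ≠ 0 → killingForm ℝ g x x < 0)
    (h m : Submodule ℝ g) (hco : IsCompl h m)
    (hhh : ∀ x ∈ h, ∀ y ∈ h, ⁅x, y⁆ ∈ h)
    (hhm : ∀ x ∈ h, ∀ y ∈ m, ⁅x, y⁆ ∈ m)
    (hmm : ∀ x ∈ m, ∀ y ∈ m, ⁅x, y⁆ ∈ h)
    (T : m →ₗ[ℝ] m →ₗ[ℝ] (m →ₗ[ℝ] m))
    (hT : ∀ X Y Z : m, ((T X Y Z : m) : g) = -⁅(X : g), ⁅(Y : g), (Z : g)⁆⁆) :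
    (∀ X Y : m, LinearMap.trace ℝ m (T X Y) = LinearMap.trace ℝ m (T Y X)) ∧
      (∀ X : m, X ≠ 0 → 0 < LinearMap.trace ℝ m (T X X)) := by
  classical
  -- `ad` shorthand
  set ad := LieAlgebra.ad ℝ g with had
  -- maps-to facts
  have hmh : ∀ x ∈ m, ∀ y ∈ h, ⁅x, y⁆ ∈ m := by
    intro x hx y hy
    have : ⁅y, x⁆ ∈ m := hhm y hy x hx
    have hneg : (-⁅y, x⁆ : g) ∈ m := m.neg_mem this
    rwa [← lie_skew] 
  -- the composite endomorphism `ad X ∘ ad Y` for `X Y : m`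
  have hAm : ∀ X Y : m, ∀ z ∈ m, (ad (X : g) ∘ₗ ad (Y : g)) z ∈ m := by
    intro X Y z hz
    simp only [LinearMap.comp_apply, had, LieAlgebra.ad_apply]
    exact hmh X.1 X.2 _ (hmm Y.1 Y.2 z hz)
  have hAh : ∀ X Y : m, ∀ z ∈ h, (ad (X : g) ∘ₗ ad (Y : g)) z ∈ h := by
    intro X Y z hz
    simp only [LinearMap.comp_apply, had, LieAlgebra.ad_apply]
    exact hmm X.1 X.2 _ (hmh Y.1 Y.2 z hz)
  -- restricted traces
  set Rm : m → m → ℝ := fun X Y =>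
    LinearMap.trace ℝ m ((ad (X : g) ∘ₗ ad (Y : g)).restrict (hAm X Y)) with hRm
  -- relation between `T` and `Rm`
  have hTRm : ∀ X Y : m, LinearMap.trace ℝ m (T X Y) = - Rm X Y := by
    intro X Y
    have : T X Y = - ((ad (X : g) ∘ₗ ad (Y : g)).restrict (hAm X Y)) := by
      apply LinearMap.ext
      intro Z
      apply Subtype.ext
      rw [hT X Y Z]
      simp [LinearMap.restrict_apply, had, LieAlgebra.ad_apply]
    rw [this, hRm]
    exact (LinearMap.trace ℝ m).map_neg _
  -- cross maps and the trace swap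
  have hswap : ∀ X Y : m, Rm X Y
      = LinearMap.trace ℝ h ((ad (Y : g) ∘ₗ ad (X : g)).restrict (hAh Y X)) := by
    intro X Y
    have hp : ∀ z ∈ m, ad (Y : g) z ∈ h := by
      intro z hz
      simpa [had, LieAlgebra.ad_apply] using hmm Y.1 Y.2 z hz
    have hq : ∀ z ∈ h, ad (X : g) z ∈ m := by
      intro z hz
      simpa [had, LieAlgebra.ad_apply] using hmh X.1 X.2 z hz
    set p : m →ₗ[ℝ] h := (ad (Y : g)).restrict hp with hpd
    set q : h →ₗ[ℝ] m := (ad (X : g)).restrict hq with hqd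
    have h1 : (ad (X : g) ∘ₗ ad (Y : g)).restrict (hAm X Y) = q ∘ₗ p := by
      apply LinearMap.ext; intro Z; apply Subtype.ext
      simp [hpd, hqd, LinearMap.restrict_apply]
    have h2 : (ad (Y : g) ∘ₗ ad (X : g)).restrict (hAh Y X) = p ∘ₗ q := by
      apply LinearMap.ext; intro Z; apply Subtype.ext
      simp [hpd, hqd, LinearMap.restrict_apply]
    rw [hRm]
    simp only [h1, h2]
    exact (LinearMap.trace_comp_comm' q p).symm
  -- Killing form decomposition
  have hB : ∀ X Y : m, killingForm ℝ g (X : g) (Y : g) = Rm Y X + Rm X Y := by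
    intro X Y
    rw [killingForm_apply_apply]
    rw [trace_split' h m hco (ad (X : g) ∘ₗ ad (Y : g)) (hAh X Y) (hAm X Y)]
    rw [hswap Y X]
  -- definiteness of the Killing form restricted to m
  have hBm : ∀ z : m, z ≠ 0 →
      (LinearMap.compl₁₂ (killingForm ℝ g) m.subtype m.subtype) z z < 0 := by
    intro z hz
    have hz' : (z : g) ≠ 0 := fun hc => hz (Subtype.ext hc)
    simpa using hcpt (z : g) hz'
  constructor
  · -- symmetry
    intro X Y
    rw [hTRm X Y, hTRm Y X]
    have hw : (⁅(Y : g), (X : g)⁆ : g) ∈ h := hmm Y.1 Y.2 X.1 X.2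
    have hwm : ∀ z ∈ m, ad (⁅(Y : g), (X : g)⁆) z ∈ m := by
      intro z hz
      simpa [had, LieAlgebra.ad_apply] using hhm _ hw z hz
    have hkey : (ad (Y : g) ∘ₗ ad (X : g)).restrict (hAm Y X)
        = (ad (X : g) ∘ₗ ad (Y : g)).restrict (hAm X Y)
          + (ad (⁅(Y : g), (X : g)⁆)).restrict hwm := by
      apply LinearMap.ext; intro Z; apply Subtype.ext
      simp only [LinearMap.add_apply, Submodule.coe_add, LinearMap.restrict_coe_apply,
        LinearMap.comp_apply, had, LieAlgebra.ad_apply]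
      rw [lie_lie]
      abel
    have hskew0 : LinearMap.trace ℝ m ((ad (⁅(Y : g), (X : g)⁆)).restrict hwm) = 0 := by
      apply skew_trace_zero' (LinearMap.compl₁₂ (killingForm ℝ g) m.subtype m.subtype) hBm
      intro z z'
      simp only [LinearMap.compl₁₂_apply, Submodule.coe_subtype, LinearMap.restrict_coe_apply,
        had, LieAlgebra.ad_apply]
      exact LieModule.traceForm_apply_lie_apply' ℝ g g _ _ _
    have heq : Rm Y X = Rm X Y := by
      simp only [hRm]
      rw [hkey, map_add, hskew0, add_zero]
    rw [heq]
  · -- positivity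
    intro X hX
    rw [hTRm X X]
    have hX' : (X : g) ≠ 0 := fun hc => hX (Subtype.ext hc)
    have hlt := hcpt (X : g) hX'
    rw [hB X X] at hlt
    linarith
end

section
/- Let g be a finite-dimensional real Lie algebra of compact type with a symmetric decomposition g = h ⊕ m, and let ⟨x,y⟩ := −B(x,y) be the inner product given by the negative Killing form. For X, Y ∈ m define Ric(X,Y) := tr(Z ↦ −⁅X,⁅Y,Z⁆⁆ : m → m). Then for every X ∈ m and every orthonormal basis Z_1, …, Z_k of m with respect to ⟨·,·⟩, one has Ric(X,X) = Σ_{i=1}^{k} ‖⁅X, Z_i⁆‖². -/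
/-- Let `g` be a finite-dimensional real Lie algebra of compact type
with symmetric decomposition `g = h ⊕ m`, with inner product `⟨x,y⟩ = -B(x,y)` given by
the negative of the Killing form `B`.  Let `Ric(X,Y)` be the trace of the endomorphism
`Z ↦ -⁅X,⁅Y,Z⁆⁆` of `m` (encoded by a bilinear map `T` with `T X Y Z = -⁅X,⁅Y,Z⁆⁆`).
Then for every `X ∈ m` and every orthonormal basis `Z₁, …, Z_k` of `m`,
`Ric(X,X) = Σᵢ ‖⁅X, Zᵢ⁆‖²`. -/
theorem ricci_apply_self_eq_sum_brackets_norm_sq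
    {g : Type*} [LieRing g] [LieAlgebra ℝ g] [FiniteDimensional ℝ g]
    (hcpt : ∀ x : g, x ≠ 0 → killingForm ℝ g x x < 0)
    (h m : Submodule ℝ g) (hco : IsCompl h m)
    (hhh : ∀ x ∈ h, ∀ y ∈ h, ⁅x, y⁆ ∈ h)
    (hhm : ∀ x ∈ h, ∀ y ∈ m, ⁅x, y⁆ ∈ m)
    (hmm : ∀ x ∈ m, ∀ y ∈ m, ⁅x, y⁆ ∈ h)
    (T : m →ₗ[ℝ] m →ₗ[ℝ] (m →ₗ[ℝ] m))
    (hT : ∀ X Y Z : m, ((T X Y Z : m) : g) = -⁅(X : g), ⁅(Y : g), (Z : g)⁆⁆)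
    {k : ℕ} (b : Module.Basis (Fin k) ℝ m)
    (hortho : ∀ i j : Fin k,
      -(killingForm ℝ g (b i : g) (b j : g)) = if i = j then 1 else 0) :
    ∀ X : m, LinearMap.trace ℝ m (T X X) =
      ∑ i : Fin k, -(killingForm ℝ g ⁅(X : g), (b i : g)⁆ ⁅(X : g), (b i : g)⁆) := by
  intro X
  -- coordinates via the orthonormal basis
  have hrepr : ∀ (v : m) (i : Fin k),
      (b.repr v) i = -(killingForm ℝ g (v : g) (b i : g)) := by
    intro v i
    have hv : (v : g) = ∑ j, (b.repr v) j • (b j : g) := by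
      conv_lhs => rw [← b.sum_repr v]
      push_cast
      rfl
    rw [hv, map_sum]
    simp only [LinearMap.sum_apply, map_smul, LinearMap.smul_apply, smul_eq_mul,
      ← Finset.sum_neg_distrib, ← mul_neg, hortho, mul_ite, mul_one, mul_zero,
      Finset.sum_ite_eq', Finset.mem_univ, if_true]
  rw [LinearMap.trace_eq_matrix_trace ℝ b, Matrix.trace]
  simp only [Matrix.diag_apply, LinearMap.toMatrix_apply]
  refine Finset.sum_congr rfl fun i _ => ?_
  rw [hrepr, hT]
  have := LieModule.traceForm_apply_lie_apply ℝ g g ⁅(X : g), (b i : g)⁆ (X : g) (b i : g)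
  rw [← lie_skew (X : g) ⁅(X:g), (b i : g)⁆]
  simp only [map_neg, LinearMap.neg_apply, neg_neg]
  rw [this]
end
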